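/- Let A, B, C, D, P, Q be complex matrices of suitable orders (with appropriate invertible Hermitian weights) such that P^[†] and Q^[†] exist. Then rank(D − C P^[†] A Q^[†] B) = rank of the 3×3 block matrix [[P^[*] A Q^[*], P^[*] P P^[*], 0],[Q^[*] Q Q^[*], 0, Q^[*] B],[0, C P^[*], −D]] minus rank(P) minus rank(Q). -/

import Mathlib

open Matrix

/-- The weighted (MN-) adjoint `A^[*] = N⁻¹ Aᴴ M` of a matrix between
indefinite inner product spaces with weights `M` (output) and `N` (input). -/
noncomputable def wadj {m n : ℕ} (M : Matrix (Fin m) (Fin m) ℂ)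
    (N : Matrix (Fin n) (Fin n) ℂ) (A : Matrix (Fin m) (Fin n) ℂ) :
    Matrix (Fin n) (Fin m) ℂ := N⁻¹ * Aᴴ * M

/-- `X` is the weighted Moore-Penrose inverse of `A` w.r.t. weights `M`, `N`:
the four weighted Penrose equations. -/
def IsWMP {m n : ℕ} (M : Matrix (Fin m) (Fin m) ℂ)
    (N : Matrix (Fin n) (Fin n) ℂ) (A : Matrix (Fin m) (Fin n) ℂ)
    (X : Matrix (Fin n) (Fin m) ℂ) : Prop :=
  A * X * A = A ∧ X * A * X = X ∧
    wadj M M (A * X) = A * X ∧ wadj N N (X * A) = X * A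

section RankHelpers
open Module LinearMap

private noncomputable def prodSubmoduleEquiv {R M M' : Type*} [Ring R] [AddCommGroup M]
    [AddCommGroup M'] [Module R M] [Module R M'] (p : Submodule R M) (q : Submodule R M') :
    (p.prod q) ≃ₗ[R] p × q where
  toFun x := (⟨x.1.1, x.2.1⟩, ⟨x.1.2, x.2.2⟩)
  invFun y := ⟨(y.1.1, y.2.1), ⟨y.1.2, y.2.2⟩⟩
  map_add' _ _ := rfl
  map_smul' _ _ := rfl
  left_inv _ := rfl
  right_inv _ := rfl

private lemma finrank_prod_submodule {R M M' : Type*} [Field R] [AddCommGroup M]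
    [AddCommGroup M'] [Module R M] [Module R M'] [FiniteDimensional R M]
    [FiniteDimensional R M'] (p : Submodule R M) (q : Submodule R M') :
    finrank R (p.prod q) = finrank R p + finrank R q := by
  rw [(prodSubmoduleEquiv p q).finrank_eq, Module.finrank_prod]

private lemma range_prodMap' {R M₁ M₂ N₁ N₂ : Type*} [Ring R] [AddCommGroup M₁] [AddCommGroup M₂]
    [AddCommGroup N₁] [AddCommGroup N₂] [Module R M₁] [Module R M₂] [Module R N₁] [Module R N₂]
    (f : M₁ →ₗ[R] N₁) (g : M₂ →ₗ[R] N₂) :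
    range (f.prodMap g) = (range f).prod (range g) := by
  ext ⟨x, y⟩
  simp only [LinearMap.mem_range, Submodule.mem_prod]
  constructor
  · rintro ⟨⟨a, b⟩, h⟩
    exact ⟨⟨a, congrArg Prod.fst h⟩, ⟨b, congrArg Prod.snd h⟩⟩
  · rintro ⟨⟨a, ha⟩, ⟨b, hb⟩⟩
    exact ⟨(a, b), Prod.ext ha hb⟩

private lemma finrank_range_comp_equiv {R M₁ M₂ N₁ N₂ : Type*} [Field R] [AddCommGroup M₁]
    [AddCommGroup M₂] [AddCommGroup N₁] [AddCommGroup N₂] [Module R M₁] [Module R M₂]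
    [Module R N₁] [Module R N₂]
    (f : M₁ →ₗ[R] N₁) (e₁ : M₂ ≃ₗ[R] M₁) (e₂ : N₁ ≃ₗ[R] N₂) :
    finrank R (range (e₂.toLinearMap ∘ₗ f ∘ₗ e₁.toLinearMap)) = finrank R (range f) := by
  rw [LinearMap.range_comp, LinearMap.range_comp_of_range_eq_top _ e₁.range,
    LinearEquiv.finrank_map_eq]

private lemma rank_fromBlocks_diag {m n m' n' : Type*} [Fintype m] [Fintype n] [Fintype m']
    [Fintype n'] (A : Matrix m n ℂ) (D : Matrix m' n' ℂ) :
    (fromBlocks A 0 0 D).rank = A.rank + D.rank := by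
  have key : (fromBlocks A 0 0 D).mulVecLin
      = (LinearEquiv.sumArrowLequivProdArrow m m' ℂ ℂ).symm.toLinearMap ∘ₗ
          ((A.mulVecLin.prodMap D.mulVecLin) ∘ₗ
            (LinearEquiv.sumArrowLequivProdArrow n n' ℂ ℂ).toLinearMap) := by
    apply LinearMap.ext; intro v
    funext i
    cases i <;>
      simp [fromBlocks_mulVec, LinearEquiv.sumArrowLequivProdArrow,
        Equiv.sumArrowEquivProdArrow]
  rw [Matrix.rank, key, finrank_range_comp_equiv, range_prodMap', finrank_prod_submodule]
  rfl

private lemma rank_fromBlocks_antidiag {m n m' n' : Type*} [Fintype m] [Fintype n] [Fintype m']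
    [Fintype n'] (B : Matrix m n' ℂ) (C : Matrix m' n ℂ) :
    (fromBlocks 0 B C 0).rank = B.rank + C.rank := by
  have key : (fromBlocks (0 : Matrix m n ℂ) B C 0).mulVecLin
      = (LinearEquiv.sumArrowLequivProdArrow m m' ℂ ℂ).symm.toLinearMap ∘ₗ
          ((B.mulVecLin.prodMap C.mulVecLin) ∘ₗ
            ((LinearEquiv.sumArrowLequivProdArrow n n' ℂ ℂ).trans
              (LinearEquiv.prodComm ℂ _ _)).toLinearMap) := by
    apply LinearMap.ext; intro v
    funext i
    cases i <;>
      simp [fromBlocks_mulVec, LinearEquiv.sumArrowLequivProdArrow,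
        Equiv.sumArrowEquivProdArrow]
  rw [Matrix.rank, key, finrank_range_comp_equiv, range_prodMap', finrank_prod_submodule]
  rfl

private lemma rank_neg' {m n : Type*} [Fintype n] (A : Matrix m n ℂ) : (-A).rank = A.rank := by
  have h : (-A).mulVecLin = -A.mulVecLin := by
    apply LinearMap.ext; intro v; simp [Matrix.neg_mulVec]
  rw [Matrix.rank, h, LinearMap.range_neg, Matrix.rank]

end RankHelpers

namespace IsWMP


variable {m n : ℕ} {M : Matrix (Fin m) (Fin m) ℂ} {N : Matrix (Fin n) (Fin n) ℂ}
  {A : Matrix (Fin m) (Fin n) ℂ} {X : Matrix (Fin n) (Fin m) ℂ}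

lemma b1 (h : IsWMP M N A X) (hM : IsUnit M) : wadj M N A * A * X = wadj M N A := by
  have hMd : IsUnit M.det := (Matrix.isUnit_iff_isUnit_det M).mp hM
  have e3 : M * (A * X) = (A * X)ᴴ * M := by
    have h3 : M⁻¹ * (A * X)ᴴ * M = A * X := h.2.2.1
    calc M * (A * X) = M * (M⁻¹ * (A * X)ᴴ * M) := by rw [h3]
    _ = M * M⁻¹ * (A * X)ᴴ * M := by simp only [Matrix.mul_assoc]
    _ = (A * X)ᴴ * M := by rw [Matrix.mul_nonsing_inv _ hMd, Matrix.one_mul]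
  have hA : Aᴴ * (A * X)ᴴ = Aᴴ := by rw [← conjTranspose_mul, h.1]
  show N⁻¹ * Aᴴ * M * A * X = N⁻¹ * Aᴴ * M
  calc N⁻¹ * Aᴴ * M * A * X = N⁻¹ * Aᴴ * (M * (A * X)) := by simp only [Matrix.mul_assoc]
  _ = N⁻¹ * (Aᴴ * (A * X)ᴴ) * M := by rw [e3]; simp only [Matrix.mul_assoc]
  _ = N⁻¹ * Aᴴ * M := by rw [hA]

lemma b2 (h : IsWMP M N A X) (hN : IsUnit N) : X * A * wadj M N A = wadj M N A := by
  have hNd : IsUnit N.det := (Matrix.isUnit_iff_isUnit_det N).mp hN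
  have e4 : X * A * N⁻¹ = N⁻¹ * (X * A)ᴴ := by
    have h4 : N⁻¹ * (X * A)ᴴ * N = X * A := h.2.2.2
    calc X * A * N⁻¹ = N⁻¹ * (X * A)ᴴ * N * N⁻¹ := by rw [h4]
    _ = N⁻¹ * (X * A)ᴴ := by rw [Matrix.mul_nonsing_inv_cancel_right _ _ hNd]
  have hA : (X * A)ᴴ * Aᴴ = Aᴴ := by
    rw [← conjTranspose_mul, ← Matrix.mul_assoc, h.1]
  show X * A * (N⁻¹ * Aᴴ * M) = N⁻¹ * Aᴴ * M
  calc X * A * (N⁻¹ * Aᴴ * M) = X * A * N⁻¹ * Aᴴ * M := by simp only [Matrix.mul_assoc]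
  _ = N⁻¹ * ((X * A)ᴴ * Aᴴ) * M := by rw [e4]; simp only [Matrix.mul_assoc]
  _ = N⁻¹ * Aᴴ * M := by rw [hA]

lemma b3 (h : IsWMP M N A X) (hM : IsUnit M) : wadj M N A * wadj N M X = X * A := by
  have hMd : IsUnit M.det := (Matrix.isUnit_iff_isUnit_det M).mp hM
  show N⁻¹ * Aᴴ * M * (M⁻¹ * Xᴴ * N) = X * A
  calc N⁻¹ * Aᴴ * M * (M⁻¹ * Xᴴ * N)
      = N⁻¹ * Aᴴ * (M * M⁻¹) * Xᴴ * N := by simp only [Matrix.mul_assoc]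
  _ = N⁻¹ * (Aᴴ * Xᴴ) * N := by
      rw [Matrix.mul_nonsing_inv _ hMd, Matrix.mul_one]; simp only [Matrix.mul_assoc]
  _ = N⁻¹ * (X * A)ᴴ * N := by rw [← conjTranspose_mul]
  _ = X * A := h.2.2.2

lemma b4 (h : IsWMP M N A X) (hN : IsUnit N) : wadj N M X * wadj M N A = A * X := by
  have hNd : IsUnit N.det := (Matrix.isUnit_iff_isUnit_det N).mp hN
  show M⁻¹ * Xᴴ * N * (N⁻¹ * Aᴴ * M) = A * X
  calc M⁻¹ * Xᴴ * N * (N⁻¹ * Aᴴ * M)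
      = M⁻¹ * Xᴴ * (N * N⁻¹) * Aᴴ * M := by simp only [Matrix.mul_assoc]
  _ = M⁻¹ * (Xᴴ * Aᴴ) * M := by
      rw [Matrix.mul_nonsing_inv _ hNd, Matrix.mul_one]; simp only [Matrix.mul_assoc]
  _ = M⁻¹ * (A * X)ᴴ * M := by rw [← conjTranspose_mul]
  _ = A * X := h.2.2.1

section trailing
variable {o : Type*}

lemma t1 (h : IsWMP M N A X) (z : Matrix (Fin m) o ℂ) : X * (A * (X * z)) = X * z := by
  simp only [← Matrix.mul_assoc]; rw [h.2.1]

lemma t2 (h : IsWMP M N A X) (z : Matrix (Fin n) o ℂ) : A * (X * (A * z)) = A * z := by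
  simp only [← Matrix.mul_assoc]; rw [h.1]

lemma t3 (h : IsWMP M N A X) (hM : IsUnit M) (z : Matrix (Fin m) o ℂ) :
    wadj M N A * (A * (X * z)) = wadj M N A * z := by
  simp only [← Matrix.mul_assoc]; rw [h.b1 hM]

lemma t4 (h : IsWMP M N A X) (hN : IsUnit N) (z : Matrix (Fin m) o ℂ) :
    X * (A * (wadj M N A * z)) = wadj M N A * z := by
  simp only [← Matrix.mul_assoc]; rw [h.b2 hN]

lemma t5 (h : IsWMP M N A X) (hM : IsUnit M) (z : Matrix (Fin n) o ℂ) :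
    wadj M N A * (wadj N M X * z) = X * (A * z) := by
  simp only [← Matrix.mul_assoc]; rw [h.b3 hM]

lemma t6 (h : IsWMP M N A X) (hN : IsUnit N) (z : Matrix (Fin m) o ℂ) :
    wadj N M X * (wadj M N A * z) = A * (X * z) := by
  simp only [← Matrix.mul_assoc]; rw [h.b4 hN]

end trailing

lemma b1r (h : IsWMP M N A X) (hM : IsUnit M) : wadj M N A * (A * X) = wadj M N A := by
  rw [← Matrix.mul_assoc, h.b1 hM]

lemma b2r (h : IsWMP M N A X) (hN : IsUnit N) : X * (A * wadj M N A) = wadj M N A := by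
  rw [← Matrix.mul_assoc, h.b2 hN]

open scoped ComplexOrder in
lemma rank_wadj (h : IsWMP M N A X) (hM : IsUnit M) (hN : IsUnit N) :
    (wadj M N A).rank = A.rank := by
  have hMd : IsUnit M.det := (Matrix.isUnit_iff_isUnit_det M).mp hM
  have hNd : IsUnit N.det := (Matrix.isUnit_iff_isUnit_det N).mp hN
  have : wadj M N A = N⁻¹ * (Aᴴ * M) := by rw [wadj, Matrix.mul_assoc]
  rw [this, Matrix.rank_mul_eq_right_of_isUnit_det _ _ (Matrix.isUnit_nonsing_inv_det _ hNd),
    Matrix.rank_mul_eq_left_of_isUnit_det _ _ hMd, Matrix.rank_conjTranspose]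

lemma rank_adj_mul_adj (h : IsWMP M N A X) (hM : IsUnit M) (hN : IsUnit N) :
    (wadj M N A * A * wadj M N A).rank = A.rank := by
  have hw := h.rank_wadj hM hN
  have le1 : (wadj M N A * A * wadj M N A).rank ≤ A.rank :=
    ((Matrix.rank_mul_le_left _ _).trans (Matrix.rank_mul_le_left _ _)).trans_eq hw
  have h5 : wadj M N A * A * wadj M N A * wadj N M X = wadj M N A * A := by
    rw [Matrix.mul_assoc (wadj M N A * A), h.b3 hM, ← Matrix.mul_assoc, h.b1 hM]
  have ge1 : A.rank ≤ (wadj M N A * A * wadj M N A).rank := by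
    calc A.rank = (wadj M N A).rank := hw.symm
    _ = (wadj M N A * A * X).rank := by rw [h.b1 hM]
    _ ≤ (wadj M N A * A).rank := Matrix.rank_mul_le_left _ _
    _ = (wadj M N A * A * wadj M N A * wadj N M X).rank := by rw [h5]
    _ ≤ (wadj M N A * A * wadj M N A).rank := Matrix.rank_mul_le_left _ _
  exact le_antisymm le1 ge1


end IsWMP

private lemma fromCols_add' {R : Type*} [Ring R] {m n₁ n₂ : Type*}
    (A₁ B₁ : Matrix m n₁ R) (A₂ B₂ : Matrix m n₂ R) :
    fromCols A₁ A₂ + fromCols B₁ B₂ = fromCols (A₁ + B₁) (A₂ + B₂) := by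
  ext i j; cases j <;> simp [fromCols_apply_inl, fromCols_apply_inr]

private lemma fromRows_add' {R : Type*} [Ring R] {m₁ m₂ n : Type*}
    (A₁ B₁ : Matrix m₁ n R) (A₂ B₂ : Matrix m₂ n R) :
    fromRows A₁ A₂ + fromRows B₁ B₂ = fromRows (A₁ + B₁) (A₂ + B₂) := by
  ext i j; cases i <;> simp [fromRows_apply_inl, fromRows_apply_inr]

theorem stmt_15 {p₁ p₂ q₁ q₂ d₁ d₂ : ℕ}
    (MP : Matrix (Fin p₁) (Fin p₁) ℂ) (NP : Matrix (Fin p₂) (Fin p₂) ℂ)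
    (MQ : Matrix (Fin q₁) (Fin q₁) ℂ) (NQ : Matrix (Fin q₂) (Fin q₂) ℂ)
    (hMP : MP.IsHermitian) (hMPu : IsUnit MP) (hNP : NP.IsHermitian) (hNPu : IsUnit NP)
    (hMQ : MQ.IsHermitian) (hMQu : IsUnit MQ) (hNQ : NQ.IsHermitian) (hNQu : IsUnit NQ)
    (P : Matrix (Fin p₁) (Fin p₂) ℂ) (Q : Matrix (Fin q₁) (Fin q₂) ℂ)
    (XP : Matrix (Fin p₂) (Fin p₁) ℂ) (XQ : Matrix (Fin q₂) (Fin q₁) ℂ)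
    (hXP : IsWMP MP NP P XP) (hXQ : IsWMP MQ NQ Q XQ)
    (A : Matrix (Fin p₁) (Fin q₂) ℂ) (B : Matrix (Fin q₁) (Fin d₂) ℂ)
    (C : Matrix (Fin d₁) (Fin p₂) ℂ) (D : Matrix (Fin d₁) (Fin d₂) ℂ) :
    (D - C * XP * A * XQ * B).rank + P.rank + Q.rank =
      (Matrix.fromBlocks
        (Matrix.fromBlocks (wadj MP NP P * A * wadj MQ NQ Q)
          (wadj MP NP P * P * wadj MP NP P)
          (wadj MQ NQ Q * Q * wadj MQ NQ Q) 0)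
        (Matrix.fromRows (0 : Matrix (Fin p₂) (Fin d₂) ℂ) (wadj MQ NQ Q * B))
        (Matrix.fromCols (0 : Matrix (Fin d₁) (Fin q₁) ℂ) (C * wadj MP NP P))
        (-D)).rank := by
  set MM := (Matrix.fromBlocks
        (Matrix.fromBlocks (wadj MP NP P * A * wadj MQ NQ Q)
          (wadj MP NP P * P * wadj MP NP P)
          (wadj MQ NQ Q * Q * wadj MQ NQ Q) 0)
        (Matrix.fromRows (0 : Matrix (Fin p₂) (Fin d₂) ℂ) (wadj MQ NQ Q * B))
        (Matrix.fromCols (0 : Matrix (Fin d₁) (Fin q₁) ℂ) (C * wadj MP NP P))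
        (-D)) with hMM
  set L := (Matrix.fromBlocks 1 0
      (Matrix.fromCols (-(C * XP * wadj NP MP XP)) (C * XP * A * XQ * wadj NQ MQ XQ)) 1 :
      Matrix ((Fin p₂ ⊕ Fin q₂) ⊕ Fin d₁) ((Fin p₂ ⊕ Fin q₂) ⊕ Fin d₁) ℂ) with hL
  set R1 := (Matrix.fromBlocks
      (Matrix.fromBlocks 1 0 (-(wadj NP MP XP * XP * A * wadj MQ NQ Q)) 1) 0 0 1 :
      Matrix ((Fin q₁ ⊕ Fin p₁) ⊕ Fin d₂) ((Fin q₁ ⊕ Fin p₁) ⊕ Fin d₂) ℂ) with hR1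
  set R2 := (Matrix.fromBlocks 1
      (Matrix.fromRows (-(wadj NQ MQ XQ * XQ * B)) 0) 0 1 :
      Matrix ((Fin q₁ ⊕ Fin p₁) ⊕ Fin d₂) ((Fin q₁ ⊕ Fin p₁) ⊕ Fin d₂) ℂ) with hR2
  have hdetL : IsUnit L.det := by
    rw [hL, Matrix.det_fromBlocks_zero₁₂]; simp
  have hdetR1 : IsUnit R1.det := by
    rw [hR1, Matrix.det_fromBlocks_zero₁₂, Matrix.det_fromBlocks_zero₁₂]; simp
  have hdetR2 : IsUnit R2.det := by
    rw [hR2, Matrix.det_fromBlocks_zero₂₁]; simp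
  have hrank : (L * MM * R1 * R2).rank = MM.rank := by
    rw [Matrix.rank_mul_eq_left_of_isUnit_det _ _ hdetR2,
      Matrix.rank_mul_eq_left_of_isUnit_det _ _ hdetR1,
      Matrix.rank_mul_eq_right_of_isUnit_det _ _ hdetL]
  have key : L * MM * R1 * R2 =
      Matrix.fromBlocks
        (Matrix.fromBlocks 0 (wadj MP NP P * P * wadj MP NP P)
          (wadj MQ NQ Q * Q * wadj MQ NQ Q) 0)
        (Matrix.fromRows 0 0) (Matrix.fromCols 0 0)
        (C * XP * A * XQ * B - D) := by
    rw [hMM, hL, hR1, hR2]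
    simp only [Matrix.mul_assoc, Matrix.fromBlocks_multiply, Matrix.fromCols_mul_fromBlocks,
      Matrix.fromBlocks_mul_fromRows, Matrix.fromCols_mul_fromRows, fromCols_add',
      fromRows_add', Matrix.mul_one, Matrix.one_mul, Matrix.mul_zero, Matrix.zero_mul,
      zero_add, add_zero, neg_zero, Matrix.neg_mul, Matrix.mul_neg, neg_neg,
      hXP.t1, hXP.t2, hXP.t3 hMPu, hXP.t4 hNPu, hXP.t5 hMPu, hXP.t6 hNPu,
      hXP.b1r hMPu, hXP.b2r hNPu, hXP.b3 hMPu, hXP.b4 hNPu,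
      hXQ.t1, hXQ.t2, hXQ.t3 hMQu, hXQ.t4 hNQu, hXQ.t5 hMQu, hXQ.t6 hNQu,
      hXQ.b1r hMQu, hXQ.b2r hNQu, hXQ.b3 hMQu, hXQ.b4 hNQu,
      neg_add_cancel, add_neg_cancel, neg_sub, sub_eq_add_neg]
  have hrankP : (wadj MP NP P * P * wadj MP NP P).rank = P.rank :=
    hXP.rank_adj_mul_adj hMPu hNPu
  have hrankQ : (wadj MQ NQ Q * Q * wadj MQ NQ Q).rank = Q.rank :=
    hXQ.rank_adj_mul_adj hMQu hNQu
  have hneg : (C * XP * A * XQ * B - D) = -(D - C * XP * A * XQ * B) := by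
    rw [neg_sub]
  rw [← hrank, key, hneg, Matrix.fromRows_zero, Matrix.fromCols_zero, rank_fromBlocks_diag,
    rank_fromBlocks_antidiag, hrankP, hrankQ, rank_neg']
  omega
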